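/- (Gaussian slab estimate.) Let d ≥ 2, v ∈ ℝ^d with v ≠ 0, γ = 3/|v|, b > 0, and let ℓ' be a unit vector with (v/|v|)·ℓ' > 2/3. Set V_{ℓ',b,L} = {x ∈ ℝ^d : −bL < x·ℓ' < L, |Π_{ℓ'}(x)| < L²}. Then: (i) every y ∈ V_{ℓ',b,L} satisfies |y − γLv| ≥ L(3(v/|v|)·ℓ' − 1) > L; and (ii) for every c₂ > 0 there is a constant c depending only on b, d, c₂, |v| such that for all L ≥ 1: c₂ (γL)^{−d/2} ∫_{V_{ℓ',b,L}} exp(−|y − γLv|²/(c₂ γ L)) dy ≤ c L^{3d/2 − 1} exp(−L/(c₂ γ)). -/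

import Mathlib

open MeasureTheory Set
open scoped RealInnerProductSpace

noncomputable section

abbrev EucSp (d : ℕ) : Type := EuclideanSpace ℝ (Fin d)

/-- the bounded approximation `V_{ℓ',b,L}` of the slab, with cylinder radius `ρ`. -/
def cyl {d : ℕ} (ℓ' : EucSp d) (b L ρ : ℝ) : Set (EucSp d) :=
  {x | -(b * L) < ⟪x, ℓ'⟫ ∧ ⟪x, ℓ'⟫ < L ∧ ‖x - ⟪x, ℓ'⟫ • ℓ'‖ < ρ}

/-- coordinate bound in Euclidean space -/
lemma abs_coord_le_norm {d : ℕ} (z : EucSp d) (i : Fin d) : |z i| ≤ ‖z‖ := by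
  have h1 : ⟪EuclideanSpace.single i (1:ℝ), z⟫ = z i := by
    simp [EuclideanSpace.inner_single_left]
  have h2 := abs_real_inner_le_norm (EuclideanSpace.single i (1:ℝ)) z
  rw [h1, EuclideanSpace.norm_single] at h2
  simpa using h2

/-- Lower bound for the distance from a point of the cylinder to `(3/‖v‖ * L) • v`. -/
lemma dist_lower {d : ℕ} (v : EucSp d) (hv : v ≠ 0) (ℓ' : EucSp d) (hl : ‖ℓ'‖ = 1)
    (hα : 2 / 3 < ⟪‖v‖⁻¹ • v, ℓ'⟫) (L : ℝ) (hL : 0 < L) (y : EucSp d)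
    (hy : ⟪y, ℓ'⟫ < L) :
    L * (3 * ⟪‖v‖⁻¹ • v, ℓ'⟫ - 1) ≤ ‖y - (3 / ‖v‖ * L) • v‖ ∧
      L < ‖y - (3 / ‖v‖ * L) • v‖ := by
  set u : EucSp d := ‖v‖⁻¹ • v with hu
  set α : ℝ := ⟪u, ℓ'⟫ with hαdef
  have hvnorm : ‖v‖ ≠ 0 := by simpa using hv
  have hsmul : (3 / ‖v‖ * L) • v = (3 * L) • u := by
    rw [hu, smul_smul]
    congr 1
    field_simp
  have hinner : ⟪y - (3 * L) • u, ℓ'⟫ = ⟪y, ℓ'⟫ - 3 * L * α := by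
    rw [inner_sub_left, real_inner_smul_left]
  have habs : |⟪y - (3 * L) • u, ℓ'⟫| ≤ ‖y - (3 * L) • u‖ := by
    have := abs_real_inner_le_norm (y - (3 * L) • u) ℓ'
    simpa [hl] using this
  have hkey : L * (3 * α - 1) ≤ ‖y - (3 * L) • u‖ := by
    have h1 : L * (3 * α - 1) ≤ 3 * L * α - ⟪y, ℓ'⟫ := by nlinarith
    have h2 : 3 * L * α - ⟪y, ℓ'⟫ ≤ |⟪y - (3 * L) • u, ℓ'⟫| := by
      rw [hinner, abs_sub_comm]
      exact le_abs_self _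
    linarith
  rw [hsmul]
  refine ⟨hkey, ?_⟩
  have : L < L * (3 * α - 1) := by nlinarith
  linarith

/-- Volume bound for the cylinder. -/
lemma vol_cyl_le {d : ℕ} (hd : 2 ≤ d) (ℓ' : EucSp d) (hl : ‖ℓ'‖ = 1) (b L ρ : ℝ)
    (hb : 0 ≤ b) (hL : 0 ≤ L) (hρ : 0 ≤ ρ) :
    volume (cyl ℓ' b L ρ) ≤ ENNReal.ofReal ((1 + b) * L * (2 * ρ) ^ (d - 1)) := by
  have hd0 : 0 < d := by omega
  set i₀ : Fin d := ⟨0, hd0⟩ with hi₀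
  -- extend ℓ' to an orthonormal basis
  have hcard : Module.finrank ℝ (EucSp d) = Fintype.card (Fin d) := by
    simp [finrank_euclideanSpace]
  have horth : Orthonormal ℝ (({i₀} : Set (Fin d)).restrict (fun _ => ℓ')) := by
    constructor
    · intro i; exact hl
    · intro i j hij
      exact absurd (Subsingleton.elim i j) hij
  obtain ⟨B, hB⟩ := horth.exists_orthonormalBasis_extension_of_card_eq hcard
  have hBi₀ : B i₀ = ℓ' := hB i₀ rfl
  -- the box
  set lo : Fin d → ℝ := fun i => if i = i₀ then -(b * L) else -ρ with hlo
  set hi : Fin d → ℝ := fun i => if i = i₀ then L else ρ with hhi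
  set box : Set (EuclideanSpace ℝ (Fin d)) :=
    ((MeasurableEquiv.toLp 2 (Fin d → ℝ)).symm) ⁻¹' (Set.pi univ fun i => Icc (lo i) (hi i))
    with hbox
  have hboxm : MeasurableSet box :=
    (MeasurableSet.univ_pi fun i => measurableSet_Icc).preimage
      ((MeasurableEquiv.toLp 2 (Fin d → ℝ)).symm).measurable
  -- cyl ⊆ B.repr ⁻¹' box
  have hsub : cyl ℓ' b L ρ ⊆ B.repr ⁻¹' box := by
    intro x hx
    obtain ⟨h1, h2, h3⟩ := hx
    intro i _
    show B.repr x i ∈ Icc (lo i) (hi i)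
    have hrepr : ∀ w : EucSp d, B.repr w i₀ = ⟪w, ℓ'⟫ := by
      intro w
      rw [B.repr_apply_apply, hBi₀, real_inner_comm]
    by_cases hii : i = i₀
    · subst hii
      rw [hrepr x]
      simp only [lo, hi, if_pos rfl]
      exact ⟨le_of_lt h1, le_of_lt h2⟩
    · have hcoord : B.repr x i = B.repr (x - ⟪x, ℓ'⟫ • ℓ') i := by
        have : B.repr (x - ⟪x, ℓ'⟫ • ℓ') = B.repr x - ⟪x, ℓ'⟫ • B.repr ℓ' := by
          rw [map_sub, _root_.map_smul]
        rw [this]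
        have hℓrepr : B.repr ℓ' = EuclideanSpace.single i₀ (1:ℝ) := by
          rw [← hBi₀, B.repr_self]
        rw [hℓrepr]
        simp [EuclideanSpace.single_apply, hii]
      have hbound : |B.repr x i| ≤ ρ := by
        rw [hcoord]
        calc |B.repr (x - ⟪x, ℓ'⟫ • ℓ') i| ≤ ‖B.repr (x - ⟪x, ℓ'⟫ • ℓ')‖ :=
              abs_coord_le_norm _ _
          _ = ‖x - ⟪x, ℓ'⟫ • ℓ'‖ := B.repr.norm_map _
          _ ≤ ρ := le_of_lt h3
      simp only [lo, hi, if_neg hii]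
      exact abs_le.mp hbound
  -- volume computation
  calc volume (cyl ℓ' b L ρ) ≤ volume (B.repr ⁻¹' box) := measure_mono hsub
    _ = volume box := by
        exact (B.measurePreserving_repr).measure_preimage hboxm.nullMeasurableSet
    _ = volume (Set.pi univ fun i => Icc (lo i) (hi i)) := by
        exact (EuclideanSpace.volume_preserving_symm_measurableEquiv_toLp (Fin d)).measure_preimage
          (MeasurableSet.univ_pi fun i => measurableSet_Icc).nullMeasurableSet
    _ = ∏ i, volume (Icc (lo i) (hi i)) := volume_pi_pi _
    _ = ∏ i, ENNReal.ofReal (hi i - lo i) := by simp [Real.volume_Icc]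
    _ ≤ ENNReal.ofReal ((1 + b) * L * (2 * ρ) ^ (d - 1)) := by
        rw [← Finset.mul_prod_erase Finset.univ _ (Finset.mem_univ i₀)]
        have h1 : hi i₀ - lo i₀ = (1 + b) * L := by simp [lo, hi]; ring
        have h2 : ∀ i ∈ Finset.univ.erase i₀,
            ENNReal.ofReal (hi i - lo i) = ENNReal.ofReal (2 * ρ) := by
          intro i hi'
          have : i ≠ i₀ := Finset.ne_of_mem_erase hi'
          simp [lo, hi, this]
          rw [← two_mul, ENNReal.ofReal_mul (by norm_num), ENNReal.ofReal_ofNat]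
        rw [Finset.prod_congr rfl h2, Finset.prod_const]
        have hcarderase : (Finset.univ.erase i₀).card = d - 1 := by
          rw [Finset.card_erase_of_mem (Finset.mem_univ i₀)]
          simp
        rw [hcarderase, h1, ← ENNReal.ofReal_pow (by positivity),
          ← ENNReal.ofReal_mul (by positivity)]

theorem gaussian_slab_estimate (d : ℕ) (hd : 2 ≤ d) (v : EucSp d) (hv : v ≠ 0)
    (b : ℝ) (hb : 0 < b) :
    -- (i)
    (∀ ℓ' : EucSp d, ‖ℓ'‖ = 1 → 2 / 3 < ⟪‖v‖⁻¹ • v, ℓ'⟫ →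
      ∀ L > (0:ℝ), ∀ y ∈ cyl ℓ' b L (L ^ 2),
        L * (3 * ⟪‖v‖⁻¹ • v, ℓ'⟫ - 1) ≤ ‖y - (3 / ‖v‖ * L) • v‖ ∧
        L < ‖y - (3 / ‖v‖ * L) • v‖) ∧
    -- (ii)
    (∀ c₂ > (0:ℝ), ∃ c > (0:ℝ),
      ∀ ℓ' : EucSp d, ‖ℓ'‖ = 1 → 2 / 3 < ⟪‖v‖⁻¹ • v, ℓ'⟫ →
      ∀ L ≥ (1:ℝ),
        c₂ * (3 / ‖v‖ * L) ^ (-(d : ℝ) / 2) *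
            ∫ y in cyl ℓ' b L (L ^ 2),
              Real.exp (-‖y - (3 / ‖v‖ * L) • v‖ ^ 2 / (c₂ * (3 / ‖v‖) * L)) ≤
          c * L ^ (3 * (d : ℝ) / 2 - 1) * Real.exp (-L / (c₂ * (3 / ‖v‖)))) := by
  have hvnorm : (0:ℝ) < ‖v‖ := norm_pos_iff.mpr hv
  constructor
  · intro ℓ' hl hα L hL y hy
    exact dist_lower v hv ℓ' hl hα L hL y hy.2.1
  · intro c₂ hc₂
    set γ : ℝ := 3 / ‖v‖ with hγ
    have hγpos : 0 < γ := by positivity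
    refine ⟨c₂ * γ ^ (-(d:ℝ)/2) * (1 + b) * 2 ^ (d - 1), by positivity, ?_⟩
    intro ℓ' hl hα L hL
    have hLpos : (0:ℝ) < L := lt_of_lt_of_le one_pos hL
    set s : ℝ := c₂ * γ with hs
    have hspos : 0 < s := by positivity
    set a : EucSp d := (3 / ‖v‖ * L) • v with ha
    -- bound the integrand on the cylinder
    have hbound : ∀ y ∈ cyl ℓ' b L (L ^ 2),
        ‖Real.exp (-‖y - a‖ ^ 2 / (c₂ * (3 / ‖v‖) * L))‖ ≤ Real.exp (-L / s) := by
      intro y hy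
      have hdist : L < ‖y - a‖ := (dist_lower v hv ℓ' hl hα L hLpos y hy.2.1).2
      rw [Real.norm_eq_abs, abs_of_pos (Real.exp_pos _), Real.exp_le_exp]
      rw [div_le_div_iff₀ (by positivity) hspos]
      have h1 : L ^ 2 ≤ ‖y - a‖ ^ 2 := by nlinarith [norm_nonneg (y - a)]
      have hss : c₂ * (3 / ‖v‖) = s := rfl
      nlinarith [hspos, hLpos]
    -- volume bound
    have hvol : volume (cyl ℓ' b L (L ^ 2)) ≤
        ENNReal.ofReal ((1 + b) * L * (2 * L ^ 2) ^ (d - 1)) :=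
      vol_cyl_le hd ℓ' hl b L (L ^ 2) (le_of_lt hb) (le_of_lt hLpos) (by positivity)
    have hvolfin : volume (cyl ℓ' b L (L ^ 2)) < ⊤ :=
      lt_of_le_of_lt hvol ENNReal.ofReal_lt_top
    have hmeas : AEStronglyMeasurable
        (fun y : EucSp d => Real.exp (-‖y - a‖ ^ 2 / (c₂ * (3 / ‖v‖) * L)))
        (volume.restrict (cyl ℓ' b L (L ^ 2))) := by
      apply Continuous.aestronglyMeasurable
      continuity
    have hint : ∫ y in cyl ℓ' b L (L ^ 2),
        Real.exp (-‖y - a‖ ^ 2 / (c₂ * (3 / ‖v‖) * L)) ≤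
        Real.exp (-L / s) * ((1 + b) * L * (2 * L ^ 2) ^ (d - 1)) := by
      have h := norm_setIntegral_le_of_norm_le_const hvolfin hbound
      have htoReal : (volume (cyl ℓ' b L (L ^ 2))).toReal ≤
          (1 + b) * L * (2 * L ^ 2) ^ (d - 1) := by
        rw [← ENNReal.toReal_ofReal (show (0:ℝ) ≤ (1 + b) * L * (2 * L ^ 2) ^ (d - 1) by positivity)]
        exact ENNReal.toReal_mono ENNReal.ofReal_ne_top hvol
      calc ∫ y in cyl ℓ' b L (L ^ 2),
            Real.exp (-‖y - a‖ ^ 2 / (c₂ * (3 / ‖v‖) * L))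
          ≤ ‖∫ y in cyl ℓ' b L (L ^ 2),
            Real.exp (-‖y - a‖ ^ 2 / (c₂ * (3 / ‖v‖) * L))‖ := le_abs_self _
        _ ≤ Real.exp (-L / s) * (volume (cyl ℓ' b L (L ^ 2))).toReal := h
        _ ≤ Real.exp (-L / s) * ((1 + b) * L * (2 * L ^ 2) ^ (d - 1)) := by
            exact mul_le_mul_of_nonneg_left htoReal (le_of_lt (Real.exp_pos _))
    -- assemble
    have hrpow : (γ * L) ^ (-(d:ℝ)/2) = γ ^ (-(d:ℝ)/2) * L ^ (-(d:ℝ)/2) :=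
      Real.mul_rpow (le_of_lt hγpos) (le_of_lt hLpos)
    have hfactor : (0:ℝ) ≤ c₂ * (γ * L) ^ (-(d:ℝ)/2) := by positivity
    calc c₂ * (3 / ‖v‖ * L) ^ (-(d : ℝ) / 2) *
            ∫ y in cyl ℓ' b L (L ^ 2),
              Real.exp (-‖y - a‖ ^ 2 / (c₂ * (3 / ‖v‖) * L))
        ≤ c₂ * (γ * L) ^ (-(d:ℝ)/2) *
            (Real.exp (-L / s) * ((1 + b) * L * (2 * L ^ 2) ^ (d - 1))) := by
          exact mul_le_mul_of_nonneg_left hint hfactor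
      _ = c₂ * γ ^ (-(d:ℝ)/2) * (1 + b) * 2 ^ (d - 1) *
            (L ^ (-(d:ℝ)/2) * L * (L ^ 2) ^ (d - 1)) * Real.exp (-L / s) := by
          rw [hrpow, mul_pow]
          ring
      _ = c₂ * γ ^ (-(d:ℝ)/2) * (1 + b) * 2 ^ (d - 1) *
            L ^ (3 * (d : ℝ) / 2 - 1) * Real.exp (-L / (c₂ * (3 / ‖v‖))) := by
          congr 2
          have e1 : (L ^ 2) ^ (d - 1) = L ^ (((2 * (d - 1) : ℕ)) : ℝ) := by
            rw [← pow_mul, Real.rpow_natCast]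
          have e2 : (L : ℝ) = L ^ (1 : ℝ) := (Real.rpow_one L).symm
          calc L ^ (-(d:ℝ)/2) * L * (L ^ 2) ^ (d - 1)
              = L ^ (-(d:ℝ)/2) * L ^ (1:ℝ) * L ^ (((2 * (d - 1) : ℕ)) : ℝ) := by
                rw [e1, ← e2]
            _ = L ^ (-(d:ℝ)/2 + 1 + (((2 * (d - 1) : ℕ)) : ℝ)) := by
                rw [← Real.rpow_add hLpos, ← Real.rpow_add hLpos]
            _ = L ^ (3 * (d : ℝ) / 2 - 1) := by
                congr 1
                rw [Nat.cast_mul, Nat.cast_sub (by omega : 1 ≤ d)]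
                push_cast
                ring

end
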